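/- The knight's-move strategy wins for the first player: for every cell x of the 3×3 board with x ≠ (1,1) and every cell y that is a knight's move away from x (i.e., the coordinate differences of x and y are ±1 and ±2 in some order), the three-mark position {(1,1), x, y} is a P-position. -/

import Mathlib

/-- A cell of the 3×3 board. -/
abbrev Cell : Type := Fin 3 × Fin 3

/-- The 8 winning lines: 3 rows, 3 columns, 2 main diagonals. -/
def notaktoLines : List (Finset Cell) :=
  [ {(0,0), (0,1), (0,2)}, {(1,0), (1,1), (1,2)}, {(2,0), (2,1), (2,2)},
    {(0,0), (1,0), (2,0)}, {(0,1), (1,1), (2,1)}, {(0,2), (1,2), (2,2)},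
    {(0,0), (1,1), (2,2)}, {(0,2), (1,1), (2,0)} ]

/-- A position is dead if it contains all three cells of some line. -/
def Dead (p : Finset Cell) : Prop := ∃ l ∈ notaktoLines, l ⊆ p

/-- `FirstWins p` means the player to move from position `p` has a winning
strategy in misère X-only tic-tac-toe: there is a move to an unmarked cell
that does not complete a line (a move completing a line loses immediately)
and after which the opponent, now to move, has no winning strategy. -/
def FirstWins (p : Finset Cell) : Prop :=
  ∃ x, ∃ _hx : x ∉ p, ¬ Dead (insert x p) ∧ ¬ FirstWins (insert x p)
termination_by 9 - p.card
decreasing_by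
  have h1 : (insert x p).card = p.card + 1 := Finset.card_insert_of_notMem _hx
  have h2 : (insert x p).card ≤ 9 := by
    simpa using Finset.card_le_univ (insert x p)
  omega

/-- y is a knight'\''s move away from x: the coordinate differences are
±1 and ±2 in some order. -/
def KnightMove (x y : Cell) : Prop :=
  ((x.1 : ℤ) - (y.1 : ℤ)).natAbs = 1 ∧ ((x.2 : ℤ) - (y.2 : ℤ)).natAbs = 2 ∨
  ((x.1 : ℤ) - (y.1 : ℤ)).natAbs = 2 ∧ ((x.2 : ℤ) - (y.2 : ℤ)).natAbs = 1


instance : DecidablePred Dead := fun p => by unfold Dead; infer_instance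

/-- Fuel-based boolean evaluation of `FirstWins`. -/
def fwB : Nat → Finset Cell → Bool
  | 0, _ => false
  | n+1, p =>
    decide (∃ x : Cell, x ∉ p ∧ ¬ Dead (insert x p) ∧ fwB n (insert x p) = false)

lemma card_cell : Fintype.card Cell = 9 := by decide

lemma firstWins_iff (p : Finset Cell) :
    FirstWins p ↔ ∃ x, x ∉ p ∧ ¬ Dead (insert x p) ∧ ¬ FirstWins (insert x p) := by
  rw [FirstWins]; simp only [exists_prop]

lemma fw_iff : ∀ n (p : Finset Cell), 9 ≤ n + p.card → (FirstWins p ↔ fwB n p = true)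
  | 0, p, h => by
    have hle : p.card ≤ 9 := by simpa [card_cell] using Finset.card_le_univ p
    have hp : p = Finset.univ := by
      apply Finset.eq_univ_of_card
      rw [card_cell]; omega
    constructor
    · intro hf
      rw [firstWins_iff] at hf
      obtain ⟨x, hx, _⟩ := hf
      exact absurd (hp ▸ Finset.mem_univ x) hx
    · simp [fwB]
  | n+1, p, h => by
    rw [firstWins_iff]
    simp only [fwB, decide_eq_true_eq]
    apply exists_congr; intro x
    constructor
    · rintro ⟨hx, hd, hf⟩
      refine ⟨hx, hd, ?_⟩
      have hiff := fw_iff n (insert x p) (by rw [Finset.card_insert_of_notMem hx]; omega)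
      rw [← Bool.not_eq_true, ← hiff]; exact hf
    · rintro ⟨hx, hd, hf⟩
      refine ⟨hx, hd, ?_⟩
      have hiff := fw_iff n (insert x p) (by rw [Finset.card_insert_of_notMem hx]; omega)
      rw [hiff, hf]; simp

lemma fuel_ok (p : Finset Cell) : 9 ≤ (9 - p.card) + p.card := by
  have h9 : p.card ≤ 9 := by simpa [card_cell] using Finset.card_le_univ p
  omega

instance : DecidablePred FirstWins := fun p =>
  decidable_of_iff (fwB (9 - p.card) p = true) (fw_iff _ p (fuel_ok p)).symm

instance : DecidableRel KnightMove := fun x y => by unfold KnightMove; infer_instance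


/-- The knight'\''s-move strategy wins for the first player: for every cell
x ≠ (1,1) and every cell y a knight'\''s move away from x, the position
{(1,1), x, y} is a P-position. -/
theorem knights_move_P_position :
    ∀ x y : Cell, x ≠ (1, 1) → KnightMove x y →
      ¬ Dead ({((1 : Fin 3), (1 : Fin 3)), x, y} : Finset Cell) ∧
        ¬ FirstWins ({((1 : Fin 3), (1 : Fin 3)), x, y} : Finset Cell) := by
  decide
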